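/- Let b ≥ 0, a ∈ ℝ, and N ≥ 4. Then Z₁ := ∫_{−√N}^{√N} (1 − ε²/N)^{(N−3)/2} exp(aε − bε²/2) dε satisfies Z₁ ≥ (1/L) exp(−L a²) for a constant L depending only on b (not on N or a). -/

import Mathlib

set_option maxHeartbeats 1000000


open MeasureTheory Real

lemma exp_neg_two_le (x : ℝ) (hx : 0 ≤ x) (hx2 : x ≤ 1/2) :
    Real.exp (-(2*x)) ≤ 1 - x := by
  have h1 : 2*x + 1 ≤ Real.exp (2*x) := Real.add_one_le_exp _
  have h2 : Real.exp (-(2*x)) = (Real.exp (2*x))⁻¹ := by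
    rw [Real.exp_neg]
  rw [h2, inv_le_iff_one_le_mul₀ (Real.exp_pos _)]
  nlinarith [Real.exp_pos (2*x)]

theorem Z1_lower_bound (b : ℝ) (hb : 0 ≤ b) :
    ∃ L : ℝ, 0 < L ∧ ∀ (a : ℝ) (N : ℕ), 4 ≤ N →
      (1 / L) * Real.exp (-L * a ^ 2)
        ≤ ∫ ε in Set.Icc (-Real.sqrt N) (Real.sqrt N),
            (1 - ε ^ 2 / N) ^ (((N : ℝ) - 3) / 2)
              * Real.exp (a * ε - b * ε ^ 2 / 2) := by
  set L := Real.exp (3/2 + b/2) with hL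
  have hLpos : 0 < L := Real.exp_pos _
  have hLge : 1 ≤ L := Real.one_le_exp (by linarith)
  clear_value L
  refine ⟨L, hLpos, fun a N hN => ?_⟩
  have hN4 : (4:ℝ) ≤ (N:ℝ) := by exact_mod_cast hN
  have hNpos : (0:ℝ) < N := by linarith
  set p : ℝ := ((N:ℝ) - 3)/2 with hp
  have hppos : (0:ℝ) < p := by simp only [hp]; linarith
  set f : ℝ → ℝ := fun ε => (1 - ε ^ 2 / N) ^ p * Real.exp (a * ε - b * ε ^ 2 / 2)
    with hf
  have hcont : Continuous f := by
    apply Continuous.mul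
    · rw [continuous_iff_continuousAt]
      intro x
      exact ContinuousAt.rpow_const (by fun_prop) (Or.inr hppos.le)
    · fun_prop
  have hsqrt2 : (2:ℝ) ≤ Real.sqrt N := by
    rw [show (2:ℝ) = Real.sqrt 4 by
      rw [show (4:ℝ) = 2^2 by norm_num, Real.sqrt_sq (by norm_num)]]
    exact Real.sqrt_le_sqrt hN4
  have hnonneg : ∀ ε ∈ Set.Icc (-Real.sqrt N) (Real.sqrt N), 0 ≤ f ε := by
    intro ε hε
    have h1 : ε ^ 2 ≤ N := by
      have := abs_le.mpr ⟨hε.1, hε.2⟩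
      calc ε^2 = |ε|^2 := (sq_abs ε).symm
        _ ≤ (Real.sqrt N)^2 := by gcongr
        _ = N := Real.sq_sqrt hNpos.le
    have : (0:ℝ) ≤ 1 - ε^2/N := by
      rw [sub_nonneg, div_le_one hNpos]; exact h1
    exact mul_nonneg (Real.rpow_nonneg this _) (Real.exp_pos _).le
  have hsub : Set.Icc (0:ℝ) 1 ⊆ Set.Icc (-Real.sqrt N) (Real.sqrt N) := by
    intro x hx
    exact ⟨by linarith [hx.1, hsqrt2], by linarith [hx.2, hsqrt2]⟩
  have hint : IntegrableOn f (Set.Icc (-Real.sqrt N) (Real.sqrt N)) :=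
    hcont.integrableOn_Icc
  -- lower bound integrand on [0,1]
  set c : ℝ := (1/L) * Real.exp (-L * a^2) with hc
  have hbound : ∀ ε ∈ Set.Icc (0:ℝ) 1, c ≤ f ε := by
    intro ε hε
    obtain ⟨hε0, hε1⟩ := hε
    have hε2 : ε^2 ≤ 1 := by nlinarith
    set x : ℝ := ε^2 / N with hx
    have hx0 : 0 ≤ x := by positivity
    have hx2 : x ≤ 1/2 := by
      rw [hx, div_le_iff₀ hNpos]; nlinarith
    -- first factor ≥ exp(-1)
    have hA : Real.exp (-1) ≤ (1 - ε^2/N) ^ p := by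
      have h1 : Real.exp (-(2*x)) ^ p ≤ (1 - x) ^ p :=
        Real.rpow_le_rpow (Real.exp_pos _).le (exp_neg_two_le x hx0 hx2) hppos.le
      have h2 : Real.exp (-(2*x)) ^ p = Real.exp (-(2*x) * p) := by
        rw [← Real.exp_mul]
      have h3 : -1 ≤ -(2*x) * p := by
        have : 2*x*p ≤ 1 := by
          rw [hx, hp]
          have heq : 2*(ε^2/(N:ℝ))*(((N:ℝ)-3)/2) = ε^2*((N:ℝ)-3)/(N:ℝ) := by ring
          rw [heq, div_le_one hNpos]
          nlinarith
        linarith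
      calc Real.exp (-1) ≤ Real.exp (-(2*x)*p) := Real.exp_le_exp.mpr h3
        _ = Real.exp (-(2*x)) ^ p := h2.symm
        _ ≤ (1 - x) ^ p := h1
        _ = (1 - ε^2/N) ^ p := by rw [hx]
    -- second factor ≥ exp (-|a| - b/2)
    have hB : Real.exp (-|a| - b/2) ≤ Real.exp (a * ε - b * ε^2 / 2) := by
      apply Real.exp_le_exp.mpr
      have h1 : -|a| ≤ a * ε := by
        rcases abs_cases a with ⟨h, _⟩ | ⟨h, _⟩ <;> nlinarith [abs_nonneg a]
      nlinarith
    have hc_le : c ≤ Real.exp (-1) * Real.exp (-|a| - b/2) := by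
      have hceq : c = Real.exp (-(3/2+b/2) + (-L * a^2)) := by
        rw [Real.exp_add, Real.exp_neg, ← hL, hc, one_div]
      rw [hceq, ← Real.exp_add]
      apply Real.exp_le_exp.mpr
      have h1 : (1:ℝ) * a^2 ≤ L * a^2 :=
        mul_le_mul_of_nonneg_right hLge (sq_nonneg a)
      rw [one_mul] at h1
      have h2 : |a| ≤ 1/2 + a^2 := by
        nlinarith [sq_nonneg (|a| - 1/2), sq_abs a]
      linarith
    calc c ≤ Real.exp (-1) * Real.exp (-|a| - b/2) := hc_le
      _ ≤ (1 - ε^2/N)^p * Real.exp (a * ε - b * ε^2/2) :=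
        mul_le_mul hA hB (Real.exp_pos _).le (le_trans (Real.exp_pos _).le hA)
  -- chain of integral inequalities
  have h1 : ∫ ε in Set.Icc (0:ℝ) 1, f ε
      ≤ ∫ ε in Set.Icc (-Real.sqrt N) (Real.sqrt N), f ε := by
    apply setIntegral_mono_set hint
    · exact (ae_restrict_iff' measurableSet_Icc).mpr (ae_of_all _ hnonneg)
    · exact hsub.eventuallyLE
  have h2 : c ≤ ∫ ε in Set.Icc (0:ℝ) 1, f ε := by
    have hconst : ∫ _ε in Set.Icc (0:ℝ) 1, c = c := by
      rw [setIntegral_const, Real.volume_real_Icc]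
      norm_num
    rw [← hconst]
    apply setIntegral_mono_on
    · exact integrableOn_const (by rw [Real.volume_Icc]; norm_num)
    · exact hint.mono_set hsub
    · exact measurableSet_Icc
    · exact hbound
  exact le_trans h2 h1
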